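/- There exists a function V : ℂ → ℂ such that: V is (real, Fréchet) differentiable at every point of ℂ; the pointwise derivative ∂V/∂z̄ = (1/2)(V_x + i·V_y), which is defined everywhere, is continuous on all of ℂ; and the pointwise derivative ∂V/∂z = (1/2)(V_x − i·V_y) is unbounded on every neighborhood of the origin. In particular V is differentiable everywhere but not continuously differentiable. -/

import Mathlib

open Complex MeasureTheory Set Metric Topology
open scoped ContDiff

/-- Pointwise partial derivative of `u` in the `x`-direction (junk value if it does not exist). -/
noncomputable def pdx (u : ℂ → ℂ) (z : ℂ) : ℂ := deriv (fun t : ℝ => u (z + ↑t)) 0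

/-- Pointwise partial derivative of `u` in the `y`-direction (junk value if it does not exist). -/
noncomputable def pdy (u : ℂ → ℂ) (z : ℂ) : ℂ := deriv (fun t : ℝ => u (z + ↑t * Complex.I)) 0

/-- Both pointwise partial derivatives `u_x`, `u_y` exist at `z`. -/
def PartialsAt (u : ℂ → ℂ) (z : ℂ) : Prop :=
  (∃ a, HasDerivAt (fun t : ℝ => u (z + ↑t)) a 0) ∧
  (∃ b, HasDerivAt (fun t : ℝ => u (z + ↑t * Complex.I)) b 0)

/-- The pointwise Wirtinger derivative `∂u/∂z̄ = (u_x + i u_y)/2`. -/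
noncomputable def dzbar (u : ℂ → ℂ) (z : ℂ) : ℂ := (pdx u z + Complex.I * pdy u z) / 2

/-- The pointwise Wirtinger derivative `∂u/∂z = (u_x - i u_y)/2`. -/
noncomputable def dzz (u : ℂ → ℂ) (z : ℂ) : ℂ := (pdx u z - Complex.I * pdy u z) / 2

/-- Condition (*): the partial derivatives `u_x`, `u_y` exist at every point of `Ω`
except possibly at countably many points. -/
def CondStar (u : ℂ → ℂ) (Ω : Set ℂ) : Prop :=
  ∃ S : Set ℂ, S.Countable ∧ ∀ z ∈ Ω \ S, PartialsAt u z

/-- The open rectangle `(a₁,b₁) × (a₂,b₂)` in `ℂ = ℝ²`. -/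
def Rect (a₁ b₁ a₂ b₂ : ℝ) : Set ℂ := {z : ℂ | z.re ∈ Set.Ioo a₁ b₁ ∧ z.im ∈ Set.Ioo a₂ b₂}

namespace Ex44
open Filter


noncomputable def st : ℝ → ℝ := Real.smoothTransition
noncomputable def st' : ℝ → ℝ := deriv st

noncomputable def pp (n : ℕ) : ℝ := (2:ℝ)⁻¹ ^ (n+1)
def nu (n : ℕ) : ℝ := n + 1
def AA (n : ℕ) : ℝ := 20 * (n+1)
def LL (n : ℕ) : ℝ := ((n:ℝ)+1)^2
noncomputable def rout (n : ℕ) : ℝ := Real.exp (-AA n / 2)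
noncomputable def rin (n : ℕ) : ℝ := Real.exp (-(AA n + LL n) / 2)
noncomputable def sfun (n : ℕ) (t : ℝ) : ℝ := (-Real.log t - AA n) / LL n
noncomputable def prof (n : ℕ) (t : ℝ) : ℝ := nu n * st (sfun n t)
noncomputable def B (n : ℕ) (z : ℂ) : ℂ :=
  (z - (pp n : ℂ)) * ((prof n (Complex.normSq (z - (pp n : ℂ)))) : ℂ)
noncomputable def V (z : ℂ) : ℂ := ∑' n, B n z

lemma pp_pos (n : ℕ) : 0 < pp n := by unfold pp; positivity
lemma nu_pos (n : ℕ) : 0 < nu n := by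
  have : (0:ℝ) ≤ (n:ℝ) := Nat.cast_nonneg n
  unfold nu; linarith
lemma LL_pos (n : ℕ) : 0 < LL n := by
  have : (0:ℝ) ≤ (n:ℝ) := Nat.cast_nonneg n
  unfold LL; positivity
lemma rout_pos (n : ℕ) : 0 < rout n := Real.exp_pos _
lemma rin_pos (n : ℕ) : 0 < rin n := Real.exp_pos _

lemma two_le_e : (2:ℝ) ≤ Real.exp 1 := by
  have := Real.add_one_le_exp (1:ℝ); linarith

lemma exp_nat_ge (k : ℕ) : (2:ℝ)^k ≤ Real.exp k := by
  calc (2:ℝ)^k ≤ (Real.exp 1)^k := pow_le_pow_left₀ (by norm_num) two_le_e k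
  _ = Real.exp k := by rw [← Real.exp_nat_mul, mul_one]

lemma exp_neg_le (k : ℕ) : Real.exp (-(k:ℝ)) ≤ (2:ℝ)⁻¹^k := by
  rw [Real.exp_neg, inv_pow]
  exact inv_anti₀ (by positivity) (exp_nat_ge k)

lemma rout_eq (n : ℕ) : rout n = Real.exp (-(10*((n:ℝ)+1))) := by
  unfold rout AA; ring_nf

/-- N3 -/
lemma rin_le_rout (n : ℕ) : rin n ≤ rout n := by
  unfold rin rout
  apply Real.exp_le_exp.2
  have := LL_pos n
  unfold AA at *; nlinarith

/-- N1 -/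
lemma rout_lt_pp (n : ℕ) : rout n < pp n / 100 := by
  rw [rout_eq]
  have hk : (1:ℝ) ≤ ((n:ℝ)+1) := by have : (0:ℝ) ≤ (n:ℝ) := Nat.cast_nonneg n; linarith
  have h1 : Real.exp (-(10*((n:ℝ)+1))) ≤ Real.exp (-7 - ((n+1:ℕ):ℝ)) := by
    apply Real.exp_le_exp.2; push_cast; linarith
  have h2 : Real.exp (-7 - ((n+1:ℕ):ℝ)) = Real.exp (-(7:ℝ)) * Real.exp (-((n+1:ℕ):ℝ)) := by
    rw [← Real.exp_add]; ring_nf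
  have h3 : Real.exp (-(7:ℝ)) < 1/100 := by
    rw [Real.exp_neg]
    have h100 : (100:ℝ) < Real.exp 7 := by
      have h4 : (100:ℝ) < 2^7 := by norm_num
      have h5 := exp_nat_ge 7
      push_cast at h5; linarith
    rw [inv_lt_comm₀ (Real.exp_pos 7) (by norm_num : (0:ℝ) < 1/100)]
    calc (1/100:ℝ)⁻¹ = 100 := by norm_num
    _ < Real.exp 7 := h100
  have h4 := exp_neg_le (n+1)
  have h5 : Real.exp (-((n+1:ℕ):ℝ)) > 0 := Real.exp_pos _
  have h6 : ((2:ℝ)⁻¹)^(n+1) = pp n := rfl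
  calc Real.exp (-(10*((n:ℝ)+1))) ≤ Real.exp (-(7:ℝ)) * Real.exp (-((n+1:ℕ):ℝ)) := by
        rw [← h2]; exact h1
  _ < (1/100) * pp n := by
        have h7 : Real.exp (-↑(n + 1)) ≤ pp n := h6 ▸ h4
        have h8 : 0 < pp n := pp_pos n
        nlinarith [Real.exp_pos (-(7:ℝ))]
  _ = pp n / 100 := by ring

/-- N2 -/
lemma nu_mul_rout_le (n : ℕ) : nu n * rout n ≤ pp n ^ 2 / 4 := by
  rw [rout_eq]
  have hk : (1:ℝ) ≤ ((n:ℝ)+1) := by have : (0:ℝ) ≤ (n:ℝ) := Nat.cast_nonneg n; linarith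
  have h0 : nu n ≤ Real.exp ((n:ℝ)+1) := by
    have := Real.add_one_le_exp ((n:ℝ)+1); unfold nu; linarith
  have h1 : nu n * Real.exp (-(10*((n:ℝ)+1))) ≤ Real.exp (-(9*((n:ℝ)+1))) := by
    have := Real.exp_pos (-(10*((n:ℝ)+1)))
    calc nu n * Real.exp (-(10*((n:ℝ)+1))) ≤ Real.exp ((n:ℝ)+1) * Real.exp (-(10*((n:ℝ)+1))) := by
          apply mul_le_mul_of_nonneg_right h0 (le_of_lt this)
    _ = Real.exp (-(9*((n:ℝ)+1))) := by rw [← Real.exp_add]; ring_nf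
  have h2 : Real.exp (-(9*((n:ℝ)+1))) ≤ Real.exp (-(2:ℝ)) * Real.exp (-((2*(n+1):ℕ):ℝ)) := by
    rw [← Real.exp_add]; apply Real.exp_le_exp.2; push_cast; linarith
  have h3 : Real.exp (-(2:ℝ)) ≤ 1/4 := by
    rw [Real.exp_neg]
    have h4 : (4:ℝ) ≤ Real.exp 2 := by
      have h5 := exp_nat_ge 2; push_cast at h5; norm_num at h5; linarith
    rw [inv_le_comm₀ (by positivity) (by norm_num)]
    linarith
  have h4 := exp_neg_le (2*(n+1))
  have h5 : ((2:ℝ)⁻¹)^(2*(n+1)) = pp n ^ 2 := by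
    rw [pow_mul']; rfl
  have h6 : (0:ℝ) ≤ Real.exp (-((2*(n+1):ℕ):ℝ)) := le_of_lt (Real.exp_pos _)
  calc nu n * Real.exp (-(10*((n:ℝ)+1))) ≤ Real.exp (-(2:ℝ)) * Real.exp (-((2*(n+1):ℕ):ℝ)) :=
        le_trans h1 h2
  _ ≤ (1/4) * (pp n ^2) := by
        apply mul_le_mul h3 (h5 ▸ h4) h6 (by norm_num)
  _ = pp n ^ 2 / 4 := by ring

lemma pp_mono {m n : ℕ} (h : m ≤ n) : pp n ≤ pp m :=
  pow_le_pow_of_le_one (by norm_num) (by norm_num) (by omega)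

lemma pp_half {m n : ℕ} (h : m < n) : pp n ≤ pp m / 2 := by
  have : pp n ≤ pp (m+1) := pp_mono (by omega)
  have e : pp (m+1) = pp m / 2 := by unfold pp; rw [pow_succ]; ring
  linarith [e ▸ this]



lemma st_nonneg (x : ℝ) : 0 ≤ st x := Real.smoothTransition.nonneg x
lemma st_le_one (x : ℝ) : st x ≤ 1 := Real.smoothTransition.le_one x

lemma prof_nonneg (n : ℕ) (t : ℝ) : 0 ≤ prof n t :=
  mul_nonneg (le_of_lt (nu_pos n)) (st_nonneg _)
lemma prof_le (n : ℕ) (t : ℝ) : prof n t ≤ nu n := by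
  have h := st_le_one (sfun n t)
  have := nu_pos n
  unfold prof; nlinarith

lemma rout_sq (n : ℕ) : rout n ^ 2 = Real.exp (-AA n) := by
  unfold rout; rw [sq, ← Real.exp_add]; ring_nf
lemma rin_sq (n : ℕ) : rin n ^ 2 = Real.exp (-(AA n + LL n)) := by
  unfold rin; rw [sq, ← Real.exp_add]; ring_nf

lemma prof_eq_zero {n : ℕ} {t : ℝ} (h : rout n ^ 2 ≤ t) : prof n t = 0 := by
  have h0 : (0:ℝ) < Real.exp (-AA n) := Real.exp_pos _
  rw [rout_sq] at h
  have hlog : -AA n ≤ Real.log t := by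
    have := Real.log_le_log (by linarith) h
    rwa [Real.log_exp] at this
  have : sfun n t ≤ 0 := by
    unfold sfun
    apply div_nonpos_of_nonpos_of_nonneg (by linarith) (le_of_lt (LL_pos n))
  unfold prof st
  rw [Real.smoothTransition.zero_of_nonpos this, mul_zero]

lemma prof_plateau {n : ℕ} {t : ℝ} (h0 : 0 < t) (h : t ≤ rin n ^ 2) : prof n t = nu n := by
  rw [rin_sq] at h
  have hlog : Real.log t ≤ -(AA n + LL n) := by
    have := Real.log_le_log h0 h
    rwa [Real.log_exp] at this
  have h1 : (1:ℝ) ≤ sfun n t := by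
    unfold sfun
    rw [le_div_iff₀ (LL_pos n)]
    linarith
  unfold prof st
  rw [Real.smoothTransition.one_of_one_le h1, mul_one]

lemma normSq_eq_norm_sq (w : ℂ) : Complex.normSq w = ‖w‖ ^ 2 := by
  rw [Complex.normSq_eq_norm_sq]

lemma B_zero_of_far {n : ℕ} {z : ℂ} (h : rout n ≤ ‖z - (pp n : ℂ)‖) : B n z = 0 := by
  have h2 : rout n ^ 2 ≤ Complex.normSq (z - (pp n : ℂ)) := by
    rw [normSq_eq_norm_sq]
    exact pow_le_pow_left₀ (le_of_lt (rout_pos n)) h 2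
  unfold B
  rw [prof_eq_zero h2]
  simp

lemma B_plateau {n : ℕ} {z : ℂ} (h : ‖z - (pp n : ℂ)‖ < rin n) :
    B n z = ((nu n : ℝ) : ℂ) * (z - (pp n : ℂ)) := by
  by_cases hz : z = (pp n : ℂ)
  · simp [B, hz]
  · have h0 : 0 < Complex.normSq (z - (pp n : ℂ)) := by
      rw [normSq_eq_norm_sq]
      have h : z - (pp n:ℂ) ≠ 0 := sub_ne_zero.2 hz
      exact pow_pos (norm_pos_iff.mpr h) 2
    have h1 : Complex.normSq (z - (pp n : ℂ)) ≤ rin n ^ 2 := by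
      rw [normSq_eq_norm_sq]
      exact pow_le_pow_left₀ (norm_nonneg _) (le_of_lt h) 2
    unfold B
    rw [prof_plateau h0 h1]; ring

lemma dist_pp {m n : ℕ} : ‖(pp n : ℂ) - (pp m : ℂ)‖ = |pp n - pp m| := by
  rw [← Complex.ofReal_sub, Complex.norm_real]; rfl

lemma B_zero_of_near_other {m n : ℕ} (hmn : m ≠ n) {z : ℂ}
    (h : ‖z - (pp n : ℂ)‖ < pp n / 5) : B m z = 0 := by
  apply B_zero_of_far
  have key : pp m / 100 ≤ ‖z - (pp m : ℂ)‖ := by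
    have tri : ‖(pp n : ℂ) - (pp m : ℂ)‖ ≤ ‖z - (pp n:ℂ)‖ + ‖z - (pp m:ℂ)‖ := by
      have := norm_sub_le_norm_sub_add_norm_sub ((pp n : ℂ)) z ((pp m : ℂ))
      calc ‖(pp n : ℂ) - (pp m : ℂ)‖ ≤ ‖(pp n:ℂ) - z‖ + ‖z - (pp m:ℂ)‖ := this
      _ = ‖z - (pp n:ℂ)‖ + ‖z - (pp m:ℂ)‖ := by rw [norm_sub_rev]
    rw [dist_pp] at tri
    rcases lt_or_gt_of_ne hmn with hlt | hgt
    · -- m < n : pp n ≤ pp m / 2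
      have h2 := pp_half hlt
      have hm := pp_pos m
      have h3 : |pp n - pp m| = pp m - pp n := by
        rw [abs_of_nonpos (by linarith)]; ring
      rw [h3] at tri
      have := pp_pos n; have := pp_pos m
      linarith
    · -- n < m : pp m ≤ pp n / 2
      have h2 := pp_half hgt
      have h3 : |pp n - pp m| = pp n - pp m := by
        have hn' := pp_pos n
        rw [_root_.abs_of_nonneg (by linarith)]
      rw [h3] at tri
      have := pp_pos n; have := pp_pos m
      linarith
  linarith [rout_lt_pp m]

lemma V_eq_B {n : ℕ} {z : ℂ} (h : ‖z - (pp n : ℂ)‖ < pp n / 5) : V z = B n z :=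
  tsum_eq_single n (fun m hm => B_zero_of_near_other hm h)

lemma norm_B_le (n : ℕ) (z : ℂ) : ‖B n z‖ ≤ ‖z - (pp n:ℂ)‖ * nu n := by
  unfold B
  rw [norm_mul, Complex.norm_real]
  apply mul_le_mul_of_nonneg_left _ (norm_nonneg _)
  rw [Real.norm_eq_abs, _root_.abs_of_nonneg (prof_nonneg _ _)]
  exact prof_le _ _

lemma V_zero_of_all_far {w : ℂ} (h : ∀ n, rout n ≤ ‖w - (pp n:ℂ)‖) : V w = 0 := by
  unfold V
  have : (fun n => B n w) = (fun _ => (0:ℂ)) := funext fun n => B_zero_of_far (h n)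
  rw [this, tsum_zero]

lemma V_sq_bound (w : ℂ) : ‖V w‖ ≤ ‖w‖ ^ 2 := by
  by_cases hx : ∃ n, ‖w - (pp n:ℂ)‖ < rout n
  · obtain ⟨n, hn⟩ := hx
    have hpp := pp_pos n
    have hro := rout_lt_pp n
    have h5 : ‖w - (pp n:ℂ)‖ < pp n / 5 := by linarith
    rw [V_eq_B h5]
    have h1 : ‖B n w‖ ≤ rout n * nu n := by
      have := norm_B_le n w
      have := nu_pos n
      nlinarith [norm_nonneg (w - (pp n:ℂ))]
    have h2 : rout n * nu n ≤ pp n ^2 / 4 := by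
      have := nu_mul_rout_le n; linarith [mul_comm (rout n) (nu n)]
    have h3 : pp n / 2 ≤ ‖w‖ := by
      have tri : ‖(pp n : ℂ)‖ ≤ ‖w‖ + ‖w - (pp n:ℂ)‖ := by
        have h9 : (pp n : ℂ) = w - (w - (pp n:ℂ)) := by ring
        conv_lhs => rw [h9]
        exact norm_sub_le _ _
      have hnp : ‖(pp n : ℂ)‖ = pp n := by
        rw [Complex.norm_real, Real.norm_eq_abs, _root_.abs_of_pos hpp]
      rw [hnp] at tri
      linarith
    nlinarith [norm_nonneg w]
  · push_neg at hx
    rw [V_zero_of_all_far (fun n => hx n)]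
    simpa using sq_nonneg ‖w‖

/-! ### smooth transition facts -/

lemma st_diff : Differentiable ℝ st :=
  (Real.smoothTransition.contDiff (n := 1)).differentiable (by norm_num)

lemma st'_cont : Continuous st' :=
  (Real.smoothTransition.contDiff (n := 1)).continuous_deriv le_rfl

lemma st'_zero_of_gt {x : ℝ} (h : 1 < x) : st' x = 0 := by
  have hev : st =ᶠ[𝓝 x] (fun _ => 1) := by
    filter_upwards [isOpen_Ioi.mem_nhds h] with y hy
    exact Real.smoothTransition.one_of_one_le (le_of_lt hy)
  unfold st'
  rw [hev.deriv_eq, deriv_const]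

lemma st'_zero_of_lt {x : ℝ} (h : x < 0) : st' x = 0 := by
  have hev : st =ᶠ[𝓝 x] (fun _ => 0) := by
    filter_upwards [isOpen_Iio.mem_nhds h] with y hy
    exact Real.smoothTransition.zero_of_nonpos (le_of_lt hy)
  unfold st'
  rw [hev.deriv_eq, deriv_const]

lemma exists_K : ∃ K : ℝ, 0 < K ∧ ∀ s, |st' s| ≤ K := by
  obtain ⟨C, hC⟩ := (isCompact_Icc (a := (0:ℝ)) (b := 2)).exists_bound_of_continuousOn
    st'_cont.continuousOn
  refine ⟨max C 1, by positivity, fun s => ?_⟩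
  by_cases hs : s ∈ Set.Icc (0:ℝ) 2
  · calc |st' s| = ‖st' s‖ := rfl
    _ ≤ C := hC s hs
    _ ≤ max C 1 := le_max_left _ _
  · have : st' s = 0 := by
      simp only [Set.mem_Icc, not_and_or, not_le] at hs
      rcases hs with h | h
      · exact st'_zero_of_lt h
      · exact st'_zero_of_gt (by linarith)
    rw [this]; simp

/-! ### pdx / pdy machinery -/

lemma path_x_tendsto (z : ℂ) : Tendsto (fun t : ℝ => z + (t:ℂ)) (𝓝 0) (𝓝 z) := by
  have hc : Continuous fun t : ℝ => z + (t:ℂ) := by continuity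
  have := hc.tendsto 0
  simpa using this

lemma path_y_tendsto (z : ℂ) : Tendsto (fun t : ℝ => z + (t:ℂ) * I) (𝓝 0) (𝓝 z) := by
  have hc : Continuous fun t : ℝ => z + (t:ℂ) * I := by continuity
  have := hc.tendsto 0
  simpa using this

lemma pdx_congr {u v : ℂ → ℂ} {z : ℂ} (h : u =ᶠ[𝓝 z] v) : pdx u z = pdx v z :=
  Filter.EventuallyEq.deriv_eq (h.comp_tendsto (path_x_tendsto z))

lemma pdy_congr {u v : ℂ → ℂ} {z : ℂ} (h : u =ᶠ[𝓝 z] v) : pdy u z = pdy v z :=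
  Filter.EventuallyEq.deriv_eq (h.comp_tendsto (path_y_tendsto z))

lemma dzbar_congr {u v : ℂ → ℂ} {z : ℂ} (h : u =ᶠ[𝓝 z] v) : dzbar u z = dzbar v z := by
  unfold dzbar; rw [pdx_congr h, pdy_congr h]

lemma hasDerivAt_path_x (z : ℂ) : HasDerivAt (fun t : ℝ => z + (t:ℂ)) 1 0 := by
  have h := (Complex.ofRealCLM.hasDerivAt (x := (0:ℝ))).const_add z
  simpa using h

lemma hasDerivAt_path_y (z : ℂ) : HasDerivAt (fun t : ℝ => z + (t:ℂ) * I) I 0 := by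
  have h := ((Complex.ofRealCLM.hasDerivAt (x := (0:ℝ))).mul_const I).const_add z
  simpa using h

lemma pdx_of_hasFDerivAt {u : ℂ → ℂ} {D : ℂ →L[ℝ] ℂ} {z : ℂ} (h : HasFDerivAt u D z) :
    pdx u z = D 1 := by
  have h' : HasFDerivAt u D ((fun t : ℝ => z + (t:ℂ)) 0) := by simpa using h
  have := h'.comp_hasDerivAt 0 (hasDerivAt_path_x z)
  exact this.deriv

lemma pdy_of_hasFDerivAt {u : ℂ → ℂ} {D : ℂ →L[ℝ] ℂ} {z : ℂ} (h : HasFDerivAt u D z) :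
    pdy u z = D I := by
  have h' : HasFDerivAt u D ((fun t : ℝ => z + (t:ℂ) * I) 0) := by simpa using h
  have := h'.comp_hasDerivAt 0 (hasDerivAt_path_y z)
  exact this.deriv

/-- pdx of `w ↦ c * (w - w₀)`. -/
lemma pdx_linear (c w0 z : ℂ) : pdx (fun w => c * (w - w0)) z = c := by
  unfold pdx
  have h : HasDerivAt (fun t : ℝ => c * (z + (t:ℂ) - w0)) c 0 := by
    have := ((hasDerivAt_path_x z).sub_const w0).const_mul c
    simpa using this
  exact h.deriv

lemma pdy_linear (c w0 z : ℂ) : pdy (fun w => c * (w - w0)) z = c * I := by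
  unfold pdy
  have h : HasDerivAt (fun t : ℝ => c * (z + (t:ℂ) * I - w0)) (c * I) 0 := by
    have := ((hasDerivAt_path_y z).sub_const w0).const_mul c
    simpa using this
  exact h.deriv

lemma pdx_const (z : ℂ) : pdx (fun _ => (0:ℂ)) z = 0 := by
  unfold pdx; simp

lemma pdy_const (z : ℂ) : pdy (fun _ => (0:ℂ)) z = 0 := by
  unfold pdy; simp

lemma dzbar_zero_fun (z : ℂ) : dzbar (fun _ => (0:ℂ)) z = 0 := by
  unfold dzbar; rw [pdx_const, pdy_const]; simp

/-! ### derivative computations for B n -/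

lemma hasDerivAt_prof_comp {n : ℕ} {q : ℝ → ℝ} {q' : ℝ} (hq : HasDerivAt q q' 0)
    (hq0 : q 0 ≠ 0) :
    HasDerivAt (fun u => prof n (q u))
      (nu n * (st' (sfun n (q 0)) * ((-(q' / q 0)) / LL n))) 0 := by
  have hlog : HasDerivAt (fun u => Real.log (q u)) (q' / q 0) 0 := hq.log hq0
  have hsf : HasDerivAt (fun u => sfun n (q u)) ((-(q' / q 0)) / LL n) 0 :=
    (hlog.neg.sub_const (AA n)).div_const (LL n)
  have hst : HasDerivAt st (st' (sfun n (q 0))) (sfun n (q 0)) := (st_diff _).hasDerivAt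
  have h2 := (hst.comp 0 hsf).const_mul (nu n)
  simpa [prof, Function.comp] using h2

lemma pdx_B {n : ℕ} {z : ℂ} (hz : z ≠ (pp n : ℂ)) :
    pdx (B n) z = Complex.ofReal (prof n (Complex.normSq (z - (pp n:ℂ))))
      + (z - (pp n:ℂ)) * Complex.ofReal (nu n * (st' (sfun n (Complex.normSq (z - (pp n:ℂ)))) *
          (-(2 * (z - (pp n:ℂ)).re / Complex.normSq (z - (pp n:ℂ))) / LL n))) := by
  set w := z - (pp n : ℂ) with hw
  set q : ℝ → ℝ := fun u => (w.re + u)^2 + w.im^2 with hqdef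
  have hq0 : q 0 = Complex.normSq w := by
    simp [hqdef, Complex.normSq_apply]; ring
  have hqne : q 0 ≠ 0 := by
    rw [hq0]
    exact (Complex.normSq_pos.2 (sub_ne_zero.2 hz)).ne'
  have hq : HasDerivAt q (2 * w.re) 0 := by
    have h1 : HasDerivAt (fun u : ℝ => w.re + u) 1 0 := (hasDerivAt_id 0).const_add w.re
    have h2 := (h1.pow 2).add_const (w.im^2)
    norm_num at h2
    exact h2.add_const (w.im^2)
  have hpr := hasDerivAt_prof_comp (n := n) hq hqne
  have hprC := hpr.ofReal_comp
  have hlin : HasDerivAt (fun u : ℝ => z + (u:ℂ) - (pp n:ℂ)) 1 0 := (hasDerivAt_path_x z).sub_const _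
  have hmul : HasDerivAt (fun u : ℝ => (z + (u:ℂ) - (pp n:ℂ)) * ((prof n (q u) : ℝ) : ℂ)) _ 0 := hlin.mul hprC
  have hfun : (fun u : ℝ => B n (z + (u:ℂ))) =
      fun u : ℝ => (z + (u:ℂ) - (pp n:ℂ)) * ((prof n (q u) : ℝ) : ℂ) := by
    funext u
    have hns : Complex.normSq (z + (u:ℂ) - (pp n:ℂ)) = q u := by
      simp [hqdef, Complex.normSq_apply, hw]
      ring
    simp [B, hns]
  show deriv (fun u : ℝ => B n (z + (u:ℂ))) 0 = _
  rw [hfun, hmul.deriv, hq0]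
  push_cast
  simp [← hw]

lemma pdy_B {n : ℕ} {z : ℂ} (hz : z ≠ (pp n : ℂ)) :
    pdy (B n) z = I * Complex.ofReal (prof n (Complex.normSq (z - (pp n:ℂ))))
      + (z - (pp n:ℂ)) * Complex.ofReal (nu n * (st' (sfun n (Complex.normSq (z - (pp n:ℂ)))) *
          (-(2 * (z - (pp n:ℂ)).im / Complex.normSq (z - (pp n:ℂ))) / LL n))) := by
  set w := z - (pp n : ℂ) with hw
  set q : ℝ → ℝ := fun u => w.re^2 + (w.im + u)^2 with hqdef
  have hq0 : q 0 = Complex.normSq w := by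
    simp [hqdef, Complex.normSq_apply]; ring
  have hqne : q 0 ≠ 0 := by
    rw [hq0]
    exact (Complex.normSq_pos.2 (sub_ne_zero.2 hz)).ne'
  have hq : HasDerivAt q (2 * w.im) 0 := by
    have h1 : HasDerivAt (fun u : ℝ => w.im + u) 1 0 := (hasDerivAt_id 0).const_add w.im
    have h2 := (h1.pow 2).const_add (w.re^2)
    norm_num at h2
    exact h2.const_add (w.re^2)
  have hpr := hasDerivAt_prof_comp (n := n) hq hqne
  have hprC := hpr.ofReal_comp
  have hlin : HasDerivAt (fun u : ℝ => z + (u:ℂ) * I - (pp n:ℂ)) I 0 := (hasDerivAt_path_y z).sub_const _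
  have hmul : HasDerivAt (fun u : ℝ => (z + (u:ℂ) * I - (pp n:ℂ)) * ((prof n (q u) : ℝ) : ℂ)) _ 0 := hlin.mul hprC
  have hfun : (fun u : ℝ => B n (z + (u:ℂ) * I)) =
      fun u : ℝ => (z + (u:ℂ) * I - (pp n:ℂ)) * ((prof n (q u) : ℝ) : ℂ) := by
    funext u
    have hns : Complex.normSq (z + (u:ℂ) * I - (pp n:ℂ)) = q u := by
      simp [hqdef, Complex.normSq_apply, hw]
      ring
    simp [B, hns]
  show deriv (fun u : ℝ => B n (z + (u:ℂ) * I)) 0 = _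
  rw [hfun, hmul.deriv, hq0]
  push_cast
  simp [← hw]

noncomputable def Phi (n : ℕ) (z : ℂ) : ℂ :=
  -Complex.ofReal (nu n * st' (sfun n (Complex.normSq (z - (pp n:ℂ)))) /
      (Complex.normSq (z - (pp n:ℂ)) * LL n)) * (z - (pp n:ℂ))^2

lemma B_plateau_ev (n : ℕ) :
    B n =ᶠ[𝓝 (pp n : ℂ)] fun w => Complex.ofReal (nu n) * (w - (pp n:ℂ)) := by
  filter_upwards [Metric.ball_mem_nhds _ (rin_pos n)] with w hw
  apply B_plateau
  rwa [mem_ball, dist_eq_norm] at hw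

lemma sfun_gt_one {n : ℕ} {t : ℝ} (h0 : 0 < t) (h : t < rin n ^ 2) : 1 < sfun n t := by
  rw [rin_sq] at h
  have hlog : Real.log t < -(AA n + LL n) := by
    have := Real.log_lt_log h0 h
    rwa [Real.log_exp] at this
  unfold sfun
  rw [lt_div_iff₀ (LL_pos n)]
  linarith

lemma Phi_zero_near {n : ℕ} {w : ℂ} (h : ‖w - (pp n:ℂ)‖ < rin n) : Phi n w = 0 := by
  by_cases hw : w = (pp n:ℂ)
  · simp [Phi, hw]
  · have h0 : 0 < Complex.normSq (w - (pp n:ℂ)) := Complex.normSq_pos.2 (sub_ne_zero.2 hw)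
    have h1 : Complex.normSq (w - (pp n:ℂ)) < rin n ^ 2 := by
      rw [normSq_eq_norm_sq]
      have := rin_pos n
      nlinarith [norm_nonneg (w - (pp n:ℂ))]
    have := st'_zero_of_gt (sfun_gt_one h0 h1)
    simp [Phi, this]

lemma dzbar_B (n : ℕ) (z : ℂ) : dzbar (B n) z = Phi n z := by
  by_cases hz : z = (pp n : ℂ)
  · subst hz
    have h := B_plateau_ev n
    unfold dzbar
    rw [pdx_congr h, pdy_congr h, pdx_linear, pdy_linear]
    rw [Phi_zero_near (by simpa using rin_pos n)]
    have hI : Complex.I * (Complex.ofReal (nu n) * Complex.I) = -Complex.ofReal (nu n) := by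
      rw [mul_comm, mul_assoc, Complex.I_mul_I]; ring
    rw [hI]; ring
  · unfold dzbar
    rw [pdx_B hz, pdy_B hz]
    set a := (z - (pp n:ℂ)).re with hadef
    set b := (z - (pp n:ℂ)).im with hbdef
    have hw : (a : ℂ) + (b:ℂ) * I = z - (pp n:ℂ) := Complex.re_add_im _
    have ht0 : Complex.normSq (z - (pp n:ℂ)) ≠ 0 := (Complex.normSq_pos.2 (sub_ne_zero.2 hz)).ne'
    have hL0 : LL n ≠ 0 := (LL_pos n).ne'
    have ht0' : (Complex.ofReal (Complex.normSq (z - (pp n:ℂ)))) ≠ 0 := by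
      simpa using ht0
    have hL0' : (Complex.ofReal (LL n)) ≠ 0 := by simpa using hL0
    unfold Phi
    push_cast
    linear_combination ((prof n (Complex.normSq (z - (pp n:ℂ))) : ℂ)/2) * Complex.I_sq
      - (((nu n : ℝ):ℂ) * ((st' (sfun n (Complex.normSq (z - (pp n:ℂ)))) : ℝ):ℂ) /
          (((Complex.normSq (z - (pp n:ℂ)) : ℝ):ℂ) * ((LL n : ℝ):ℂ))) * (z - (pp n:ℂ)) * hw

lemma Phi_cont (n : ℕ) : Continuous (Phi n) := by
  rw [continuous_iff_continuousAt]
  intro z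
  by_cases hz : z = (pp n:ℂ)
  · subst hz
    have hev : Phi n =ᶠ[𝓝 (pp n:ℂ)] fun _ => 0 := by
      filter_upwards [Metric.ball_mem_nhds _ (rin_pos n)] with w hw
      rw [mem_ball, dist_eq_norm] at hw
      exact Phi_zero_near hw
    have : Phi n (pp n:ℂ) = 0 := Phi_zero_near (by simpa using rin_pos n)
    exact continuousAt_const.congr (by simpa [this] using hev.symm)
  · have ht0 : Complex.normSq (z - (pp n:ℂ)) ≠ 0 := (Complex.normSq_pos.2 (sub_ne_zero.2 hz)).ne'
    have hns : ContinuousAt (fun w : ℂ => Complex.normSq (w - (pp n:ℂ))) z :=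
      (Complex.continuous_normSq.comp (continuous_id.sub continuous_const)).continuousAt
    have hlog : ContinuousAt (fun w : ℂ => Real.log (Complex.normSq (w - (pp n:ℂ)))) z :=
      hns.log ht0
    have hsf : ContinuousAt (fun w : ℂ => sfun n (Complex.normSq (w - (pp n:ℂ)))) z := by
      unfold sfun
      exact (hlog.neg.sub continuousAt_const).div_const _
    have hst' : ContinuousAt (fun w : ℂ => st' (sfun n (Complex.normSq (w - (pp n:ℂ))))) z :=
      st'_cont.continuousAt.comp hsf
    have hden : ContinuousAt (fun w : ℂ => Complex.normSq (w - (pp n:ℂ)) * LL n) z :=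
      hns.mul continuousAt_const
    have hden0 : Complex.normSq (z - (pp n:ℂ)) * LL n ≠ 0 :=
      mul_ne_zero ht0 (LL_pos n).ne'
    have hre : ContinuousAt (fun w : ℂ => nu n * st' (sfun n (Complex.normSq (w - (pp n:ℂ)))) /
        (Complex.normSq (w - (pp n:ℂ)) * LL n)) z :=
      ((continuousAt_const.mul hst').div hden hden0)
    have hC : ContinuousAt (fun w : ℂ => Complex.ofReal (nu n * st' (sfun n (Complex.normSq (w - (pp n:ℂ)))) /
        (Complex.normSq (w - (pp n:ℂ)) * LL n))) z :=
      Complex.continuous_ofReal.continuousAt.comp hre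
    exact (hC.neg.mul (((continuous_id.sub continuous_const).pow 2).continuousAt))

lemma Phi_bound {K : ℝ} (hK : ∀ s, |st' s| ≤ K) (n : ℕ) (z : ℂ) :
    ‖Phi n z‖ ≤ K / nu n := by
  have hK0 : 0 ≤ K := le_trans (abs_nonneg _) (hK 0)
  have hν := nu_pos n
  set T := Complex.normSq (z - (pp n:ℂ)) with hT
  have hT0 : 0 ≤ T := Complex.normSq_nonneg _
  set S := st' (sfun n T) with hS
  have hnorm : ‖Phi n z‖ = |nu n * S / (T * LL n)| * T := by
    unfold Phi
    rw [norm_mul, norm_neg, Complex.norm_real, Real.norm_eq_abs, ← hT, ← hS]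
    congr 1
    rw [norm_pow, ← Real.sqrt_sq (norm_nonneg (z - (pp n:ℂ)))]
    rw [hT, normSq_eq_norm_sq]
    rw [Real.sqrt_sq (norm_nonneg _)]
  rw [hnorm]
  rcases eq_or_lt_of_le hT0 with h0 | h0
  · rw [← h0]; simp; positivity
  · have hLL := LL_pos n
    have hSK := hK (sfun n T)
    have habs : |nu n * S / (T * LL n)| = nu n * |S| / (T * LL n) := by
      rw [abs_div, abs_mul, _root_.abs_of_pos hν, _root_.abs_of_pos (by positivity : (0:ℝ) < T * LL n)]
    rw [habs]
    have hLL_eq : LL n = nu n * nu n := by unfold LL nu; ring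
    have heq : nu n * |S| / (T * LL n) * T = |S| / nu n := by
      rw [hLL_eq]; field_simp
    rw [heq]
    gcongr

lemma B_diff (n : ℕ) (z : ℂ) : DifferentiableAt ℝ (B n) z := by
  by_cases hz : z = (pp n:ℂ)
  · subst hz
    have h := B_plateau_ev n
    have hlin : DifferentiableAt ℝ (fun w : ℂ => Complex.ofReal (nu n) * (w - (pp n:ℂ)))
        ((pp n:ℂ)) := ((differentiableAt_id.sub_const ((pp n:ℂ))).const_mul _)
    exact hlin.congr_of_eventuallyEq h
  · have ht0 : Complex.normSq (z - (pp n:ℂ)) ≠ 0 := (Complex.normSq_pos.2 (sub_ne_zero.2 hz)).ne'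
    have hfun : B n = fun w =>
        (w - (pp n:ℂ)) * Complex.ofReal (prof n ((w - (pp n:ℂ)).re * (w - (pp n:ℂ)).re
          + (w - (pp n:ℂ)).im * (w - (pp n:ℂ)).im)) := by
      funext w
      simp [B, Complex.normSq_apply]
    rw [hfun]
    have hre : DifferentiableAt ℝ (fun w : ℂ => (w - (pp n:ℂ)).re) z :=
      (Complex.reCLM.differentiable.comp (differentiable_id.sub_const _)).differentiableAt
    have him : DifferentiableAt ℝ (fun w : ℂ => (w - (pp n:ℂ)).im) z :=
      (Complex.imCLM.differentiable.comp (differentiable_id.sub_const _)).differentiableAt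
    have hq : DifferentiableAt ℝ (fun w : ℂ => (w - (pp n:ℂ)).re * (w - (pp n:ℂ)).re
        + (w - (pp n:ℂ)).im * (w - (pp n:ℂ)).im) z := (hre.mul hre).add (him.mul him)
    have hq0 : ((z - (pp n:ℂ)).re * (z - (pp n:ℂ)).re
        + (z - (pp n:ℂ)).im * (z - (pp n:ℂ)).im) ≠ 0 := by
      rwa [← Complex.normSq_apply]
    have hlog : DifferentiableAt ℝ (fun w : ℂ => Real.log ((w - (pp n:ℂ)).re * (w - (pp n:ℂ)).re
        + (w - (pp n:ℂ)).im * (w - (pp n:ℂ)).im)) z := hq.log hq0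
    have hsf : DifferentiableAt ℝ (fun w : ℂ => sfun n ((w - (pp n:ℂ)).re * (w - (pp n:ℂ)).re
        + (w - (pp n:ℂ)).im * (w - (pp n:ℂ)).im)) z := by
      unfold sfun
      simp only [div_eq_mul_inv]
      exact (hlog.neg.sub_const (AA n)).mul (differentiableAt_const ((LL n)⁻¹))
    have hst : DifferentiableAt ℝ (fun w : ℂ => prof n ((w - (pp n:ℂ)).re * (w - (pp n:ℂ)).re
        + (w - (pp n:ℂ)).im * (w - (pp n:ℂ)).im)) z := by
      unfold prof
      exact (differentiableAt_const (nu n)).mul ((st_diff _).comp z hsf)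
    have hC : DifferentiableAt ℝ (fun w : ℂ => Complex.ofReal (prof n ((w - (pp n:ℂ)).re * (w - (pp n:ℂ)).re
        + (w - (pp n:ℂ)).im * (w - (pp n:ℂ)).im))) z :=
      (Complex.ofRealCLM.differentiableAt).comp z hst
    exact DifferentiableAt.mul ((differentiableAt_id).sub_const ((pp n:ℂ))) hC

lemma dzz_at_center (n : ℕ) : dzz V (pp n : ℂ) = Complex.ofReal (nu n) := by
  have hro := rout_lt_pp n
  have hri := rin_le_rout n
  have hpp := pp_pos n
  have hev : V =ᶠ[𝓝 (pp n:ℂ)] fun w => Complex.ofReal (nu n) * (w - (pp n:ℂ)) := by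
    filter_upwards [Metric.ball_mem_nhds _ (rin_pos n), B_plateau_ev n] with w hw hB
    rw [mem_ball, dist_eq_norm] at hw
    rw [V_eq_B (by linarith : ‖w - (pp n:ℂ)‖ < pp n / 5), hB]
  unfold dzz
  rw [pdx_congr hev, pdy_congr hev, pdx_linear, pdy_linear]
  have hI : Complex.I * (Complex.ofReal (nu n) * Complex.I) = -Complex.ofReal (nu n) := by
    rw [mul_comm, mul_assoc, Complex.I_mul_I]; ring
  rw [hI]; ring

/-! ### V at and near 0 -/

lemma pp_le_norm_add (n : ℕ) (w : ℂ) : pp n ≤ ‖w‖ + ‖w - (pp n:ℂ)‖ := by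
  have h9 : (pp n : ℂ) = w - (w - (pp n:ℂ)) := by ring
  have tri : ‖(pp n : ℂ)‖ ≤ ‖w‖ + ‖w - (pp n:ℂ)‖ := by
    conv_lhs => rw [h9]
    exact norm_sub_le _ _
  have hnp : ‖(pp n : ℂ)‖ = pp n := by
    rw [Complex.norm_real, Real.norm_eq_abs, _root_.abs_of_pos (pp_pos n)]
  linarith [hnp ▸ tri]

lemma V_zero : V 0 = 0 := by
  apply V_zero_of_all_far
  intro n
  have h : ‖(0:ℂ) - (pp n:ℂ)‖ = pp n := by
    rw [zero_sub, norm_neg, Complex.norm_real, Real.norm_eq_abs, _root_.abs_of_pos (pp_pos n)]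
  rw [h]
  linarith [rout_lt_pp n, pp_pos n]

lemma hV0 : HasFDerivAt V (0 : ℂ →L[ℝ] ℂ) 0 := by
  rw [hasFDerivAt_iff_isLittleO_nhds_zero]
  simp only [V_zero, zero_add, ContinuousLinearMap.zero_apply, sub_zero]
  rw [Asymptotics.isLittleO_iff]
  intro c hc
  filter_upwards [Metric.ball_mem_nhds (0:ℂ) hc] with w hw
  rw [mem_ball, dist_zero_right] at hw
  calc ‖V w‖ ≤ ‖w‖^2 := V_sq_bound w
  _ = ‖w‖ * ‖w‖ := sq ‖w‖
  _ ≤ c * ‖w‖ := mul_le_mul_of_nonneg_right (le_of_lt hw) (norm_nonneg w)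
  _ = c * ‖(fun h : ℂ => h) w‖ := rfl

lemma V_eq_B_near {n : ℕ} {z : ℂ} (h : ‖z - (pp n:ℂ)‖ < pp n/5) :
    V =ᶠ[𝓝 z] B n := by
  have hball : Metric.ball ((pp n:ℂ)) (pp n/5) ∈ 𝓝 z :=
    Metric.isOpen_ball.mem_nhds (by rwa [mem_ball, dist_eq_norm])
  filter_upwards [hball] with w hw
  rw [mem_ball, dist_eq_norm] at hw
  exact V_eq_B hw

lemma V_zero_on_void {z : ℂ} (hz : z ≠ 0) (h : ∀ n, pp n/5 ≤ ‖z - (pp n:ℂ)‖)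
    {w : ℂ} (hw : ‖w - z‖ < ‖z‖/100) : V w = 0 := by
  apply V_zero_of_all_far
  intro n
  have hro := rout_lt_pp n
  have hpp := pp_pos n
  have hz0 : 0 < ‖z‖ := norm_pos_iff.2 hz
  have tri : ‖z - (pp n:ℂ)‖ ≤ ‖z - w‖ + ‖w - (pp n:ℂ)‖ :=
    norm_sub_le_norm_sub_add_norm_sub z w ((pp n:ℂ))
  rw [norm_sub_rev z w] at tri
  by_cases hcase : ‖z‖/5 ≤ pp n
  · have := h n
    linarith
  · push_neg at hcase
    have tri2 : ‖z‖ ≤ ‖z - (pp n:ℂ)‖ + pp n := by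
      have h9 : z = (z - (pp n:ℂ)) + (pp n:ℂ) := by ring
      have : ‖z‖ ≤ ‖z - (pp n:ℂ)‖ + ‖(pp n:ℂ)‖ := by
        conv_lhs => rw [h9]
        exact norm_add_le _ _
      have hnp : ‖(pp n : ℂ)‖ = pp n := by
        rw [Complex.norm_real, Real.norm_eq_abs, _root_.abs_of_pos (pp_pos n)]
      linarith [hnp ▸ this]
    linarith

lemma V_eq_zero_near {z : ℂ} (hz : z ≠ 0) (h : ∀ n, pp n/5 ≤ ‖z - (pp n:ℂ)‖) :
    V =ᶠ[𝓝 z] fun _ => 0 := by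
  have hz0 : 0 < ‖z‖ := norm_pos_iff.2 hz
  filter_upwards [Metric.ball_mem_nhds z (by positivity : 0 < ‖z‖/100)] with w hw
  rw [mem_ball, dist_eq_norm] at hw
  exact V_zero_on_void hz h hw

/-! ### the three properties -/

lemma V_diff (z : ℂ) : DifferentiableAt ℝ V z := by
  by_cases hz : z = 0
  · subst hz; exact hV0.differentiableAt
  by_cases hn : ∃ n, ‖z - (pp n:ℂ)‖ < pp n/5
  · obtain ⟨n, hn⟩ := hn
    exact (B_diff n z).congr_of_eventuallyEq (V_eq_B_near hn)
  · push_neg at hn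
    exact (differentiableAt_const (0:ℂ)).congr_of_eventuallyEq (V_eq_zero_near hz hn)

lemma dzbar_V_zero : dzbar V 0 = 0 := by
  unfold dzbar
  rw [pdx_of_hasFDerivAt hV0, pdy_of_hasFDerivAt hV0]
  simp

lemma dzbar_V_near {n : ℕ} {z : ℂ} (h : ‖z - (pp n:ℂ)‖ < pp n/5) : dzbar V z = Phi n z := by
  rw [dzbar_congr (V_eq_B_near h), dzbar_B]

lemma pp_lt_imp {m n : ℕ} (h : pp n < pp m) : m < n := by
  by_contra hc
  push_neg at hc
  exact absurd (pp_mono hc) (not_le.2 h)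

lemma dzbar_V_cont : Continuous (dzbar V) := by
  rw [continuous_iff_continuousAt]
  intro z
  by_cases hz : z = 0
  · subst hz
    obtain ⟨K, hK0, hK⟩ := exists_K
    rw [Metric.continuousAt_iff]
    intro ε hε
    obtain ⟨N, hN⟩ := exists_nat_gt (K/ε)
    have hN0 : 0 < (N:ℝ) := lt_of_le_of_lt (by positivity) hN
    refine ⟨pp N / 2, by have := pp_pos N; linarith, ?_⟩
    intro w hw
    rw [dist_zero_right] at hw
    rw [dzbar_V_zero, dist_zero_right]
    by_cases hw0 : w = 0
    · subst hw0; rw [dzbar_V_zero]; simpa using hε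
    by_cases hn : ∃ n, ‖w - (pp n:ℂ)‖ < pp n/5
    · obtain ⟨n, hn⟩ := hn
      rw [dzbar_V_near hn]
      have hb := Phi_bound hK n w
      have hpp := pp_pos n
      have htri := pp_le_norm_add n w
      have hwlow : pp n / 2 ≤ ‖w‖ := by linarith
      have hplt : pp n < pp N := by linarith
      have hNn : N < n := pp_lt_imp hplt
      have hnu : (N:ℝ) ≤ nu n := by
        unfold nu
        have : (N:ℝ) ≤ (n:ℝ) := by exact_mod_cast le_of_lt hNn
        linarith
      have hKn : K / nu n ≤ K / N := by
        apply div_le_div_of_nonneg_left hK0.le hN0 hnu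
      have hKN : K / N < ε := by
        rw [div_lt_iff₀ hN0]
        have := (div_lt_iff₀ hε).1 hN
        nlinarith
      linarith
    · push_neg at hn
      rw [dzbar_congr (V_eq_zero_near hw0 hn), dzbar_zero_fun]
      simpa using hε
  · by_cases hn : ∃ n, ‖z - (pp n:ℂ)‖ < pp n/5
    · obtain ⟨n, hn⟩ := hn
      have hev : dzbar V =ᶠ[𝓝 z] Phi n := by
        have hball : Metric.ball ((pp n:ℂ)) (pp n/5) ∈ 𝓝 z :=
          Metric.isOpen_ball.mem_nhds (by rwa [mem_ball, dist_eq_norm])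
        filter_upwards [hball] with w hw
        rw [mem_ball, dist_eq_norm] at hw
        exact dzbar_V_near hw
      exact ((Phi_cont n).continuousAt).congr hev.symm
    · push_neg at hn
      have hz0 : 0 < ‖z‖ := norm_pos_iff.2 hz
      have hev : dzbar V =ᶠ[𝓝 z] fun _ => 0 := by
        filter_upwards [Metric.ball_mem_nhds z (by positivity : 0 < ‖z‖/200)] with w hw
        rw [mem_ball, dist_eq_norm] at hw
        have hVev : V =ᶠ[𝓝 w] fun _ => 0 := by
          filter_upwards [Metric.ball_mem_nhds w (by positivity : 0 < ‖z‖/200)] with u hu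
          rw [mem_ball, dist_eq_norm] at hu
          have : ‖u - z‖ < ‖z‖/100 := by
            have tri : ‖u - z‖ ≤ ‖u - w‖ + ‖w - z‖ :=
              norm_sub_le_norm_sub_add_norm_sub u w z
            linarith
          exact V_zero_on_void hz hn this
        rw [dzbar_congr hVev, dzbar_zero_fun]
      exact continuousAt_const.congr hev.symm

lemma V_unbounded : ∀ U ∈ 𝓝 (0:ℂ), ∀ C : ℝ, ∃ z ∈ U, C < ‖dzz V z‖ := by
  intro U hU C
  obtain ⟨ε, hε, hball⟩ := Metric.mem_nhds_iff.1 hU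
  obtain ⟨n1, hn1⟩ := exists_nat_gt C
  obtain ⟨n2, hn2⟩ := exists_pow_lt_of_lt_one hε (by norm_num : (2:ℝ)⁻¹ < 1)
  set n := max n1 n2 with hndef
  refine ⟨(pp n : ℂ), ?_, ?_⟩
  · apply hball
    rw [mem_ball, dist_zero_right]
    have h1 : ‖(pp n:ℂ)‖ = pp n := by
      rw [Complex.norm_real, Real.norm_eq_abs, _root_.abs_of_pos (pp_pos n)]
    rw [h1]
    calc pp n ≤ (2:ℝ)⁻¹ ^ n2 := by
          apply pow_le_pow_of_le_one (by norm_num) (by norm_num)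
          have : n2 ≤ n := le_max_right n1 n2
          omega
    _ < ε := hn2
  · rw [dzz_at_center]
    have h1 : ‖Complex.ofReal (nu n)‖ = nu n := by
      rw [Complex.norm_real, Real.norm_eq_abs, _root_.abs_of_pos (nu_pos n)]
    rw [h1]
    unfold nu
    have h2 : (n1:ℝ) ≤ (n:ℝ) := by exact_mod_cast le_max_left n1 n2
    linarith

end Ex44

/-- Example (ex4.4): a differentiable function with continuous ∂V/∂z̄ but
∂V/∂z unbounded near the origin. -/
theorem stmt8 : ∃ V : ℂ → ℂ,
    (∀ z, DifferentiableAt ℝ V z) ∧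
    Continuous (dzbar V) ∧
    (∀ U ∈ 𝓝 (0 : ℂ), ∀ C : ℝ, ∃ z ∈ U, C < ‖dzz V z‖) :=
  ⟨Ex44.V, Ex44.V_diff, Ex44.dzbar_V_cont, Ex44.V_unbounded⟩
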